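/- Given a colorful k-center instance with ω color classes and a feasible fractional solution (x, z) to LP1(ω), there exists a set C ⊆ P with |C| ≤ k such that the balls of radius 2 around the points of C cover at least p_1 points of 𝒞_1, and, for each 2 ≤ i ≤ ω, at least p_i − (ω − 1) · max_{j ∈ P : z_j > 0} |𝓕(j) ∩ 𝒞_i| points of 𝒞_i; i.e., |𝒞_1 ∩ ∪_{c ∈ C} 𝓑(c, 2)| ≥ p_1 and |𝒞_i ∩ ∪_{c ∈ C} 𝓑(c, 2)| ≥ p_i − (ω − 1) · max_{j : z_j > 0} |𝓕(j) ∩ 𝒞_i| for 2 ≤ i ≤ ω. -/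

import Mathlib

open scoped Classical

/-- The ball of radius `ρ` around `j` in a finite metric space. -/
noncomputable def bal {P : Type*} [Fintype P] [MetricSpace P] (j : P) (ρ : ℝ) : Finset P :=
  Finset.univ.filter fun i => dist i j ≤ ρ

/-- The flower centered at `j`. -/
noncomputable def flower {P : Type*} [Fintype P] [MetricSpace P] (j : P) : Finset P :=
  (bal j 1).biUnion fun i => bal i 1

open Finset in
lemma exists_kernel {α : Type*} [DecidableEq α] {ι : Type*} [Fintype ι]
    (F : Finset α) (hF : Fintype.card ι < F.card) (g : ι → α → ℝ) :
    ∃ d : α → ℝ, (∀ s, s ∉ F → d s = 0) ∧ (∃ s ∈ F, d s ≠ 0) ∧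
      ∀ c, ∑ s ∈ F, d s * g c s = 0 := by
  classical
  let φ : (↥F → ℝ) →ₗ[ℝ] (ι → ℝ) :=
    { toFun := fun v c => ∑ s : ↥F, v s * g c (s : α)
      map_add' := by intro v w; funext c; simp [add_mul, Finset.sum_add_distrib]
      map_smul' := by intro r v; funext c; simp [Finset.mul_sum, mul_assoc] }
  have hker : LinearMap.ker φ ≠ ⊥ := by
    intro h
    have hinj : Function.Injective φ := LinearMap.ker_eq_bot.mp h
    have h2 := LinearMap.finrank_le_finrank_of_injective hinj
    rw [Module.finrank_fintype_fun_eq_card, Module.finrank_fintype_fun_eq_card,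
      Fintype.card_coe] at h2
    omega
  obtain ⟨v, hv, hv0⟩ := Submodule.exists_mem_ne_zero_of_ne_bot hker
  refine ⟨fun s => if h : s ∈ F then v ⟨s, h⟩ else 0, fun s hs => by simp [hs], ?_, ?_⟩
  · by_contra hcon
    push_neg at hcon
    apply hv0
    funext s
    have := hcon s s.2
    simpa [s.2] using this
  · intro c
    have hφ : φ v = 0 := LinearMap.mem_ker.mp hv
    have h3 := congrFun hφ c
    have h4 : ∑ s ∈ F, (if h : s ∈ F then v ⟨s, h⟩ else 0) * g c s
        = ∑ s : ↥F, v s * g c (s : α) := by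
      rw [← Finset.sum_attach F]
      exact Finset.sum_congr rfl fun s _ => by simp [s.2]
    rw [h4]
    exact h3

open Finset in
lemma exists_topk {α : Type*} [DecidableEq α] (a : α → ℝ) :
    ∀ (t : ℕ) (F : Finset α), t ≤ F.card →
    ∃ U, U ⊆ F ∧ U.card = t ∧ ∀ u ∈ U, ∀ v ∈ F, v ∉ U → a v ≤ a u := by
  intro t
  induction t with
  | zero => exact fun F _ => ⟨∅, empty_subset F, rfl, by simp⟩
  | succ n ih =>
    intro F ht
    obtain ⟨U, hUF, hcard, hdom⟩ := ih F (le_trans (Nat.le_succ n) ht)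
    have hne : (F \ U).Nonempty := by
      rw [sdiff_nonempty]
      intro hsub
      have := Finset.card_le_card hsub
      omega
    obtain ⟨m, hm, hmax⟩ := Finset.exists_max_image (F \ U) a hne
    have hmF : m ∈ F := (Finset.mem_sdiff.mp hm).1
    have hmU : m ∉ U := (Finset.mem_sdiff.mp hm).2
    refine ⟨insert m U, Finset.insert_subset hmF hUF, by rw [Finset.card_insert_of_notMem hmU, hcard], ?_⟩
    intro u hu v hv hvU
    have hvU' : v ∉ U := fun h => hvU (Finset.mem_insert_of_mem h)
    rcases Finset.mem_insert.mp hu with rfl | hu'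
    · exact hmax v (Finset.mem_sdiff.mpr ⟨hv, hvU'⟩)
    · exact hdom u hu' v hv hvU'

lemma dominate {α : Type*} [DecidableEq α] (F U : Finset α) (hU : U ⊆ F) (y a : α → ℝ)
    (hy0 : ∀ s ∈ F, 0 ≤ y s) (hy1 : ∀ s ∈ F, y s ≤ 1) (ha : ∀ s ∈ F, 0 ≤ a s)
    (hsum : ∑ s ∈ F, y s ≤ (U.card : ℝ))
    (hdom : ∀ u ∈ U, ∀ v ∈ F, v ∉ U → a v ≤ a u) :
    ∑ s ∈ F, y s * a s ≤ ∑ s ∈ U, a s := by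
  rcases U.eq_empty_or_nonempty with rfl | hne
  · simp only [Finset.card_empty, Nat.cast_zero] at hsum
    have hz : ∀ s ∈ F, y s = 0 :=
      (Finset.sum_eq_zero_iff_of_nonneg hy0).mp (le_antisymm hsum (Finset.sum_nonneg hy0))
    rw [Finset.sum_congr rfl fun s hs => by rw [hz s hs, zero_mul]]
    simp
  · obtain ⟨u0, hu0, hmin⟩ := Finset.exists_min_image U a hne
    have hθ0 : 0 ≤ a u0 := ha u0 (hU hu0)
    have hsplit : ∑ s ∈ F, y s * a s = ∑ s ∈ U, y s * a s + ∑ s ∈ F \ U, y s * a s := by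
      rw [← Finset.sum_sdiff hU]; ring
    have h1 : ∑ s ∈ F \ U, y s * a s ≤ (a u0) * ∑ s ∈ F \ U, y s := by
      rw [Finset.mul_sum]
      refine Finset.sum_le_sum fun s hs => ?_
      have hsF := (Finset.mem_sdiff.mp hs).1
      have hsU := (Finset.mem_sdiff.mp hs).2
      rw [mul_comm]
      exact mul_le_mul_of_nonneg_right (hdom u0 hu0 s hsF hsU) (hy0 s hsF)
    have h2 : ∑ s ∈ F \ U, y s ≤ ∑ s ∈ U, (1 - y s) := by
      have : ∑ s ∈ F \ U, y s = ∑ s ∈ F, y s - ∑ s ∈ U, y s := by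
        rw [← Finset.sum_sdiff hU]; ring
      rw [this, Finset.sum_sub_distrib, Finset.sum_const, nsmul_eq_mul, mul_one]
      linarith
    have h3 : (a u0) * ∑ s ∈ U, (1 - y s) ≤ ∑ s ∈ U, (1 - y s) * a s := by
      rw [Finset.mul_sum]
      refine Finset.sum_le_sum fun s hs => ?_
      have h1y : 0 ≤ 1 - y s := by linarith [hy1 s (hU hs)]
      rw [mul_comm]
      exact mul_le_mul_of_nonneg_left (hmin s hs) h1y
    have h4 : (a u0) * ∑ s ∈ F \ U, y s ≤ (a u0) * ∑ s ∈ U, (1 - y s) :=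
      mul_le_mul_of_nonneg_left h2 hθ0
    have : ∑ s ∈ U, y s * a s + ∑ s ∈ U, (1 - y s) * a s = ∑ s ∈ U, a s := by
      rw [← Finset.sum_add_distrib]
      exact Finset.sum_congr rfl fun s _ => by ring
    linarith

open Finset in
lemma reduce {α : Type*} [DecidableEq α] {ι : Type*} [Fintype ι]
    (S : Finset α) (A : ι → α → ℝ) :
    ∀ (N : ℕ) (y : α → ℝ),
      (S.filter fun s => y s ≠ 0 ∧ y s ≠ 1).card ≤ N →
      (∀ s ∈ S, 0 ≤ y s ∧ y s ≤ 1) →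
      ∃ y' : α → ℝ, (∀ s ∈ S, 0 ≤ y' s ∧ y' s ≤ 1) ∧
        (∀ c, ∑ s ∈ S, y' s * A c s = ∑ s ∈ S, y s * A c s) ∧
        (S.filter fun s => y' s ≠ 0 ∧ y' s ≠ 1).card ≤ Fintype.card ι := by
  intro N
  induction N with
  | zero =>
    intro y hcard hy
    exact ⟨y, hy, fun c => rfl, le_trans hcard (Nat.zero_le _)⟩
  | succ N ih =>
    intro y hcard hy
    by_cases hdone : (S.filter fun s => y s ≠ 0 ∧ y s ≠ 1).card ≤ Fintype.card ι
    · exact ⟨y, hy, fun c => rfl, hdone⟩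
    push_neg at hdone
    set F := S.filter fun s => y s ≠ 0 ∧ y s ≠ 1 with hF
    have hFS : F ⊆ S := Finset.filter_subset _ _
    obtain ⟨d, hd0, ⟨s0, hs0F, hs00⟩, hdsum⟩ := exists_kernel F hdone A
    have hFy : ∀ s ∈ F, 0 < y s ∧ y s < 1 := by
      intro s hs
      obtain ⟨hsS, hne0, hne1⟩ := Finset.mem_filter.mp hs
      exact ⟨lt_of_le_of_ne (hy s hsS).1 (Ne.symm hne0), lt_of_le_of_ne (hy s hsS).2 hne1⟩
    set bound : α → ℝ := fun s => if 0 < d s then (1 - y s) / d s else y s / (-(d s)) with hbound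
    set F' := F.filter fun s => d s ≠ 0 with hF'
    have hF'ne : F'.Nonempty := ⟨s0, Finset.mem_filter.mpr ⟨hs0F, hs00⟩⟩
    obtain ⟨sm, hsm, hmin⟩ := Finset.exists_min_image F' bound hF'ne
    set ε := bound sm with hε
    have hb0 : ∀ s ∈ F', 0 ≤ bound s := by
      intro s hs
      obtain ⟨hsF, hds⟩ := Finset.mem_filter.mp hs
      obtain ⟨h0, h1⟩ := hFy s hsF
      by_cases hpos : 0 < d s
      · simp only [hbound, if_pos hpos]
        exact div_nonneg (by linarith) (le_of_lt hpos)
      · have hneg : d s < 0 := lt_of_le_of_ne (not_lt.mp hpos) hds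
        simp only [hbound, if_neg hpos]
        exact div_nonneg (le_of_lt h0) (by linarith)
    have hε0 : 0 ≤ ε := hb0 sm hsm
    set y'' : α → ℝ := fun s => y s + ε * d s with hy''
    have hnotF : ∀ s, s ∉ F → y'' s = y s := by
      intro s hs; simp [hy'', hd0 s hs]
    have hrange : ∀ s ∈ S, 0 ≤ y'' s ∧ y'' s ≤ 1 := by
      intro s hsS
      by_cases hsF : s ∈ F
      · obtain ⟨h0, h1⟩ := hFy s hsF
        rcases lt_trichotomy (d s) 0 with hneg | hzero | hpos
        · have hsF' : s ∈ F' := Finset.mem_filter.mpr ⟨hsF, ne_of_lt hneg⟩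
          have hεb : ε ≤ bound s := hmin s hsF'
          have hbs : bound s = y s / (-(d s)) := by
            simp [hbound, not_lt.mpr (le_of_lt hneg)]
          constructor
          · have : ε * d s ≥ bound s * d s :=
              mul_le_mul_of_nonpos_right hεb (le_of_lt hneg)
            have hbd : bound s * d s = - y s := by
              rw [hbs]
              have hds : d s ≠ 0 := ne_of_lt hneg
              field_simp
            simp only [hy'']
            nlinarith
          · have : ε * d s ≤ 0 := mul_nonpos_of_nonneg_of_nonpos hε0 (le_of_lt hneg)
            simp only [hy'']; linarith
        · simp [hy'', hzero]; constructor <;> linarith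
        · have hsF' : s ∈ F' := Finset.mem_filter.mpr ⟨hsF, ne_of_gt hpos⟩
          have hεb : ε ≤ bound s := hmin s hsF'
          have hbs : bound s = (1 - y s) / d s := by simp [hbound, hpos]
          constructor
          · have : 0 ≤ ε * d s := mul_nonneg hε0 (le_of_lt hpos)
            simp only [hy'']; linarith
          · have h5 : ε * d s ≤ bound s * d s :=
              mul_le_mul_of_nonneg_right hεb (le_of_lt hpos)
            have hbd : bound s * d s = 1 - y s := by
              rw [hbs]; field_simp
            simp only [hy'']; nlinarith
      · rw [hnotF s hsF]; exact hy s hsS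
    have hsums : ∀ c, ∑ s ∈ S, y'' s * A c s = ∑ s ∈ S, y s * A c s := by
      intro c
      have hzero : ∑ s ∈ S, d s * A c s = 0 := by
        rw [← hdsum c]
        refine (Finset.sum_subset hFS ?_).symm
        intro s _ hsF
        rw [hd0 s hsF, zero_mul]
      have : ∑ s ∈ S, y'' s * A c s
          = ∑ s ∈ S, y s * A c s + ε * ∑ s ∈ S, d s * A c s := by
        rw [Finset.mul_sum, ← Finset.sum_add_distrib]
        exact Finset.sum_congr rfl fun s _ => by simp [hy'']; ring
      rw [this, hzero, mul_zero, add_zero]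
    -- sm becomes integral
    have hsmF : sm ∈ F := (Finset.mem_filter.mp hsm).1
    have hsmd : d sm ≠ 0 := (Finset.mem_filter.mp hsm).2
    have hsm01 : y'' sm = 0 ∨ y'' sm = 1 := by
      by_cases hpos : 0 < d sm
      · right
        have : ε = (1 - y sm) / d sm := by simp [hε, hbound, hpos]
        have hds : d sm ≠ 0 := hsmd
        simp only [hy'', this]
        field_simp
        ring
      · left
        have : ε = y sm / (-(d sm)) := by simp [hε, hbound, hpos]
        have hds : d sm ≠ 0 := hsmd
        simp only [hy'', this]
        field_simp
        ring
    have hsubset : (S.filter fun s => y'' s ≠ 0 ∧ y'' s ≠ 1) ⊆ F.erase sm := by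
      intro s hs
      obtain ⟨hsS, hne0, hne1⟩ := Finset.mem_filter.mp hs
      have hsF : s ∈ F := by
        by_contra hsF
        rw [hnotF s hsF] at hne0 hne1
        exact hsF (Finset.mem_filter.mpr ⟨hsS, hne0, hne1⟩)
      refine Finset.mem_erase.mpr ⟨?_, hsF⟩
      rintro rfl
      rcases hsm01 with h | h
      · exact hne0 h
      · exact hne1 h
    have hcard' : (S.filter fun s => y'' s ≠ 0 ∧ y'' s ≠ 1).card ≤ N := by
      have h6 := Finset.card_le_card hsubset
      have h7 : (F.erase sm).card = F.card - 1 := Finset.card_erase_of_mem hsmF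
      have h8 : F.card ≤ N + 1 := hcard
      have h9 : 0 < F.card := Finset.card_pos.mpr ⟨sm, hsmF⟩
      omega
    obtain ⟨y', h1, h2, h3⟩ := ih y'' hcard' hrange
    exact ⟨y', h1, fun c => (h2 c).trans (hsums c), h3⟩

open Finset in
lemma rounding {α : Type*} [DecidableEq α] {ω : ℕ} (S : Finset α) (k : ℕ)
    (y : α → ℝ) (a : α → Fin ω → ℕ) (p M : Fin ω → ℕ) (i0 : Fin ω)
    (hy : ∀ s ∈ S, 0 ≤ y s ∧ y s ≤ 1) (hk : ∑ s ∈ S, y s ≤ (k : ℝ))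
    (hp : ∀ c, (p c : ℝ) ≤ ∑ s ∈ S, y s * (a s c : ℝ))
    (hM : ∀ s ∈ S, ∀ c, a s c ≤ M c) :
    ∃ C, C ⊆ S ∧ C.card ≤ k ∧
      (p i0 : ℝ) ≤ ∑ s ∈ C, (a s i0 : ℝ) ∧
      ∀ c, c ≠ i0 → (p c : ℝ) - ((ω : ℝ) - 1) * (M c : ℝ) ≤ ∑ s ∈ C, (a s c : ℝ) := by
  classical
  set A : Option (Fin ω) → α → ℝ := fun c s => Option.elim c 1 (fun c' => (a s c' : ℝ)) with hA
  obtain ⟨y', hy', hsums, hfrac⟩ :=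
    reduce S A (S.filter fun s => y s ≠ 0 ∧ y s ≠ 1).card y le_rfl hy
  rw [Fintype.card_option, Fintype.card_fin] at hfrac
  set O := S.filter fun s => y' s = 1 with hO
  set Fq := S.filter fun s => y' s ≠ 0 ∧ y' s ≠ 1 with hFq
  have hOS : O ⊆ S := Finset.filter_subset _ _
  have hFqS : Fq ⊆ S := Finset.filter_subset _ _
  have hdisj : Disjoint O Fq := by
    rw [Finset.disjoint_left]
    intro s hsO hsF
    exact ((Finset.mem_filter.mp hsF).2).2 ((Finset.mem_filter.mp hsO).2)
  -- decomposition of sums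
  have hdecomp : ∀ c, ∑ s ∈ S, y' s * A c s
      = ∑ s ∈ O, A c s + ∑ s ∈ Fq, y' s * A c s := by
    intro c
    have hsub : O ∪ Fq ⊆ S := Finset.union_subset hOS hFqS
    have hzero : ∀ s ∈ S, s ∉ O ∪ Fq → y' s * A c s = 0 := by
      intro s hsS hs
      rw [Finset.mem_union] at hs
      push_neg at hs
      have h1 : y' s ≠ 1 := fun h => hs.1 (Finset.mem_filter.mpr ⟨hsS, h⟩)
      have h0 : y' s = 0 := by
        by_contra h0
        exact hs.2 (Finset.mem_filter.mpr ⟨hsS, h0, h1⟩)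
      rw [h0, zero_mul]
    rw [← Finset.sum_subset hsub hzero, Finset.sum_union hdisj]
    congr 1
    refine Finset.sum_congr rfl fun s hs => ?_
    rw [(Finset.mem_filter.mp hs).2, one_mul]
  have hstot : ∀ c, ∑ s ∈ S, y' s * A c s = ∑ s ∈ S, y s * A c s := hsums
  -- total mass
  have hmass : (O.card : ℝ) + ∑ s ∈ Fq, y' s ≤ (k : ℝ) := by
    have h1 := hdecomp none
    have h2 := hstot none
    simp only [hA, Option.elim] at h1 h2
    simp only [mul_one] at h1 h2
    have h3 : ∑ s ∈ O, (1 : ℝ) = (O.card : ℝ) := by simp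
    calc (O.card : ℝ) + ∑ s ∈ Fq, y' s = ∑ s ∈ S, y' s := by rw [← h3, ← h1]
    _ = ∑ s ∈ S, y s := h2
    _ ≤ (k : ℝ) := hk
  set fm := ∑ s ∈ Fq, y' s with hfm
  have hfm0 : 0 ≤ fm := Finset.sum_nonneg fun s hs => (hy' s (hFqS hs)).1
  have hfmcard : fm ≤ (Fq.card : ℝ) := by
    calc fm ≤ ∑ s ∈ Fq, (1:ℝ) := Finset.sum_le_sum fun s hs => (hy' s (hFqS hs)).2
    _ = (Fq.card : ℝ) := by simp
  set t := ⌈fm⌉₊ with ht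
  have htFq : t ≤ Fq.card := Nat.ceil_le.mpr hfmcard
  have hfmt : fm ≤ (t : ℝ) := Nat.le_ceil fm
  have hOt : O.card + t ≤ k := by
    have h1 : (t : ℝ) < fm + 1 := Nat.ceil_lt_add_one hfm0
    have : ((O.card + t : ℕ) : ℝ) < (k : ℝ) + 1 := by push_cast; linarith
    have := (by exact_mod_cast this : (O.card + t : ℕ) < k + 1)
    omega
  obtain ⟨U, hUFq, hUcard, hUdom⟩ := exists_topk (fun s => (a s i0 : ℝ)) t Fq htFq
  have hdisjOU : Disjoint O U := hdisj.mono_right hUFq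
  refine ⟨O ∪ U, Finset.union_subset hOS (hUFq.trans hFqS), ?_, ?_, ?_⟩
  · rw [Finset.card_union_of_disjoint hdisjOU, hUcard]
    exact hOt
  · -- color i0
    have hdom := dominate Fq U hUFq y' (fun s => (a s i0 : ℝ))
      (fun s hs => (hy' s (hFqS hs)).1) (fun s hs => (hy' s (hFqS hs)).2)
      (fun s _ => by positivity) (by rw [hUcard]; exact hfmt) hUdom
    have h1 := hdecomp (some i0)
    have h2 := hstot (some i0)
    simp only [hA, Option.elim] at h1 h2
    rw [Finset.sum_union hdisjOU]
    have := hp i0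
    linarith [this, h1, h2, hdom]
  · -- other colors
    intro c hc
    have hω2 : 2 ≤ ω := by
      have h1 : (c : ℕ) < ω := c.2
      have h2 : (i0 : ℕ) < ω := i0.2
      have h3 : (c : ℕ) ≠ (i0 : ℕ) := fun h => hc (Fin.ext h)
      omega
    have h1 := hdecomp (some c)
    have h2 := hstot (some c)
    simp only [hA, Option.elim] at h1 h2
    -- split Fq sum over U and Fq \ U
    have hsplit : ∑ s ∈ Fq, y' s * (a s c : ℝ)
        = ∑ s ∈ U, y' s * (a s c : ℝ) + ∑ s ∈ Fq \ U, y' s * (a s c : ℝ) := by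
      rw [← Finset.sum_sdiff hUFq]; ring
    have hUge : ∑ s ∈ U, y' s * (a s c : ℝ) ≤ ∑ s ∈ U, (a s c : ℝ) := by
      refine Finset.sum_le_sum fun s hs => ?_
      have h3 := hy' s (hFqS (hUFq hs))
      nlinarith [h3.1, h3.2, (by positivity : (0:ℝ) ≤ (a s c : ℝ))]
    have hloss : ∑ s ∈ Fq \ U, y' s * (a s c : ℝ) ≤ ((ω : ℝ) - 1) * (M c : ℝ) := by
      have hMc0 : (0:ℝ) ≤ (M c : ℝ) := by positivity
      by_cases hcase : t ≤ ω - 1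
      · -- mass bound
        have hb : ∑ s ∈ Fq \ U, y' s * (a s c : ℝ) ≤ (M c : ℝ) * ∑ s ∈ Fq \ U, y' s := by
          rw [Finset.mul_sum]
          refine Finset.sum_le_sum fun s hs => ?_
          have hsFq := (Finset.mem_sdiff.mp hs).1
          have h4 : (a s c : ℝ) ≤ (M c : ℝ) := by exact_mod_cast hM s (hFqS hsFq) c
          have h5 := (hy' s (hFqS hsFq)).1
          nlinarith
        have hmassb : ∑ s ∈ Fq \ U, y' s ≤ fm := by
          have : ∑ s ∈ Fq \ U, y' s = fm - ∑ s ∈ U, y' s := by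
            rw [hfm, ← Finset.sum_sdiff hUFq]; ring
          have h6 : 0 ≤ ∑ s ∈ U, y' s :=
            Finset.sum_nonneg fun s hs => (hy' s (hFqS (hUFq hs))).1
          linarith
        have h7 : (t : ℝ) ≤ (ω : ℝ) - 1 := by
          have : (t : ℝ) ≤ ((ω - 1 : ℕ) : ℝ) := by exact_mod_cast hcase
          rw [Nat.cast_sub (by omega)] at this
          simpa using this
        calc ∑ s ∈ Fq \ U, y' s * (a s c : ℝ) ≤ (M c : ℝ) * ∑ s ∈ Fq \ U, y' s := hb
        _ ≤ (M c : ℝ) * (t : ℝ) := mul_le_mul_of_nonneg_left (le_trans hmassb hfmt) hMc0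
        _ ≤ ((ω : ℝ) - 1) * (M c : ℝ) := by
              rw [mul_comm]
              exact mul_le_mul_of_nonneg_right h7 hMc0
      · -- count bound : |Fq \ U| = Fq.card - t ≤ ω + 1 - t ≤ 1
        have hcnt : (Fq \ U).card ≤ 1 := by
          have := Finset.card_sdiff_of_subset hUFq
          omega
        have hb : ∑ s ∈ Fq \ U, y' s * (a s c : ℝ) ≤ ((Fq \ U).card : ℝ) * (M c : ℝ) := by
          have h8 : ∀ s ∈ Fq \ U, y' s * (a s c : ℝ) ≤ (M c : ℝ) := by
            intro s hs
            have hsFq := (Finset.mem_sdiff.mp hs).1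
            have h4 : (a s c : ℝ) ≤ (M c : ℝ) := by exact_mod_cast hM s (hFqS hsFq) c
            have h5 := hy' s (hFqS hsFq)
            nlinarith [h5.1, h5.2, (by positivity : (0:ℝ) ≤ (a s c : ℝ))]
          have h9 := Finset.sum_le_card_nsmul (Fq \ U) (fun s => y' s * (a s c : ℝ)) ((M c : ℝ)) h8
          simpa [nsmul_eq_mul] using h9
        have hω1 : (1:ℝ) ≤ (ω:ℝ) - 1 := by
          have : (2:ℝ) ≤ (ω:ℝ) := by exact_mod_cast hω2
          linarith
        have hcnt' : ((Fq \ U).card : ℝ) ≤ 1 := by exact_mod_cast hcnt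
        have ha1 : ((Fq \ U).card : ℝ) * (M c : ℝ) ≤ 1 * (M c : ℝ) :=
          mul_le_mul_of_nonneg_right hcnt' hMc0
        have ha2 : (1:ℝ) * (M c : ℝ) ≤ ((ω:ℝ) - 1) * (M c : ℝ) :=
          mul_le_mul_of_nonneg_right hω1 hMc0
        linarith
    rw [Finset.sum_union hdisjOU]
    have := hp c
    linarith [this, h1, h2, hsplit, hUge, hloss]

lemma mem_bal {P : Type*} [Fintype P] [MetricSpace P] {i j : P} {ρ : ℝ} :
    i ∈ bal j ρ ↔ dist i j ≤ ρ := by simp [bal]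

lemma mem_flower {P : Type*} [Fintype P] [MetricSpace P] {i j : P} :
    i ∈ flower j ↔ ∃ m, dist m j ≤ 1 ∧ dist i m ≤ 1 := by
  simp [flower, mem_bal]

lemma flower_symm {P : Type*} [Fintype P] [MetricSpace P] {i j : P} :
    i ∈ flower j ↔ j ∈ flower i := by
  rw [mem_flower, mem_flower]
  constructor <;>
  · rintro ⟨m, h1, h2⟩
    exact ⟨m, by rwa [dist_comm], by rwa [dist_comm]⟩

lemma mem_flower_self {P : Type*} [Fintype P] [MetricSpace P] (j : P) : j ∈ flower j :=
  mem_flower.mpr ⟨j, by simp, by simp⟩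

lemma flower_subset_bal2 {P : Type*} [Fintype P] [MetricSpace P] (j : P) :
    flower j ⊆ bal j 2 := by
  intro i hi
  obtain ⟨m, h1, h2⟩ := mem_flower.mp hi
  rw [mem_bal]
  calc dist i j ≤ dist i m + dist m j := dist_triangle i m j
  _ ≤ 2 := by linarith


lemma greedy_ex {P : Type*} [Fintype P] [MetricSpace P] (z : P → ℝ) :
    ∀ T : Finset P, ∃ S : Finset P, S ⊆ T ∧
      (∀ i ∈ T, ∃ s ∈ S, i ∈ flower s ∧ z i ≤ z s) ∧
      (∀ s ∈ S, ∀ s' ∈ S, s ≠ s' → s' ∉ flower s) := by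
  intro T
  induction T using Finset.strongInduction with
  | H T ih =>
    rcases T.eq_empty_or_nonempty with rfl | hne
    · exact ⟨∅, le_rfl, by simp, by simp⟩
    · obtain ⟨s, hsT, hmax⟩ := Finset.exists_max_image T z hne
      have hssub : T \ flower s ⊂ T := by
        refine (Finset.ssubset_iff_of_subset Finset.sdiff_subset).mpr ⟨s, hsT, ?_⟩
        simp [Finset.mem_sdiff, mem_flower_self]
      obtain ⟨S', hS'sub, hS'cov, hS'sep⟩ := ih (T \ flower s) hssub
      have hS'T : S' ⊆ T := hS'sub.trans (Finset.sdiff_subset)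
      refine ⟨insert s S', Finset.insert_subset hsT hS'T, ?_, ?_⟩
      · intro i hiT
        by_cases hifl : i ∈ flower s
        · exact ⟨s, Finset.mem_insert_self s S', hifl, hmax i hiT⟩
        · obtain ⟨s', hs', h1, h2⟩ := hS'cov i (Finset.mem_sdiff.mpr ⟨hiT, hifl⟩)
          exact ⟨s', Finset.mem_insert_of_mem hs', h1, h2⟩
      · intro s1 hs1 s2 hs2 hne12
        rcases Finset.mem_insert.mp hs1 with rfl | hs1'
        · rcases Finset.mem_insert.mp hs2 with rfl | hs2'
          · exact absurd rfl hne12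
          · exact (Finset.mem_sdiff.mp (hS'sub hs2')).2
        · rcases Finset.mem_insert.mp hs2 with rfl | hs2'
          · intro hcon
            exact (Finset.mem_sdiff.mp (hS'sub hs1')).2 (flower_symm.mp hcon)
          · exact hS'sep s1 hs1' s2 hs2' hne12

/-- the pseudo-approximation guarantee for `ω` color classes. Given a feasible
fractional solution `(x, z)` to LP1(ω), at most `k` balls of radius two cover at least `p 1`
points of the first color class and, for each other class `i`, at least
`p i − (ω − 1) · max_{j : z j > 0} |𝓕(j) ∩ 𝒞 i|` points of `𝒞 i`. -/
theorem stmt14 {P : Type*} [Fintype P] [MetricSpace P]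
    (ω : ℕ) (hω : 0 < ω) (𝒞 : Fin ω → Finset P)
    (hpart : ∀ q : P, ∃! i : Fin ω, q ∈ 𝒞 i)
    (k : ℕ) (p : Fin ω → ℕ) (x z : P → ℝ)
    (hx0 : ∀ i, 0 ≤ x i) (hx1 : ∀ i, x i ≤ 1)
    (hz0 : ∀ i, 0 ≤ z i) (hz1 : ∀ i, z i ≤ 1)
    (hcov : ∀ i : P, z i ≤ ∑ m ∈ bal i 1, x m)
    (hk : ∑ i : P, x i ≤ (k : ℝ))
    (hp : ∀ j : Fin ω, (p j : ℝ) ≤ ∑ i ∈ 𝒞 j, z i) :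
    ∃ C : Finset P, C.card ≤ k ∧
      p ⟨0, hω⟩ ≤ (𝒞 ⟨0, hω⟩ ∩ C.biUnion fun c => bal c 2).card ∧
      ∀ i : Fin ω, i ≠ ⟨0, hω⟩ →
        (p i : ℤ) - (ω - 1 : ℤ) *
            (((Finset.univ.filter fun j => 0 < z j).sup fun j => (flower j ∩ 𝒞 i).card : ℕ) : ℤ)
          ≤ ((𝒞 i ∩ C.biUnion fun c => bal c 2).card : ℤ) := by
  classical
  set T := Finset.univ.filter fun j => 0 < z j with hT
  have hTmem : ∀ i, i ∈ T ↔ 0 < z i := fun i => by simp [hT]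
  obtain ⟨S, hST, hcov', hsep⟩ := greedy_ex z T
  obtain ⟨sel, hselspec⟩ : ∃ sel : P → P,
      ∀ i ∈ T, sel i ∈ S ∧ i ∈ flower (sel i) ∧ z i ≤ z (sel i) := by
    have hsel : ∀ i ∈ T, ∃ s, s ∈ S ∧ i ∈ flower s ∧ z i ≤ z s := by
      intro i hi
      obtain ⟨s, h1, h2, h3⟩ := hcov' i hi
      exact ⟨s, h1, h2, h3⟩
    refine ⟨fun i => if h : i ∈ T then (hsel i h).choose else i, fun i hi => ?_⟩
    simp only [dif_pos hi]
    exact (hsel i hi).choose_spec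
  set Fc : P → Finset P := fun s => T.filter fun i => sel i = s with hFc
  have hFcflower : ∀ s, Fc s ⊆ flower s := by
    intro s i hi
    obtain ⟨hiT, hisel⟩ := Finset.mem_filter.mp hi
    have := (hselspec i hiT).2.1
    rwa [hisel] at this
  have hFcdisj : ∀ s s', s ≠ s' → Disjoint (Fc s) (Fc s') := by
    intro s s' hne
    rw [Finset.disjoint_left]
    intro i hi hi'
    exact hne (((Finset.mem_filter.mp hi).2).symm.trans (Finset.mem_filter.mp hi').2)
  set y : P → ℝ := fun s => min 1 (∑ m ∈ bal s 1, x m) with hy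
  set a : P → Fin ω → ℕ := fun s c => ((Fc s) ∩ 𝒞 c).card with ha
  set M : Fin ω → ℕ := fun c => T.sup fun j => (flower j ∩ 𝒞 c).card with hM
  -- y range
  have hyr : ∀ s ∈ S, 0 ≤ y s ∧ y s ≤ 1 := by
    intro s _
    constructor
    · exact le_min zero_le_one (Finset.sum_nonneg fun m _ => hx0 m)
    · exact min_le_left _ _
  -- total budget
  have hksum : ∑ s ∈ S, y s ≤ (k : ℝ) := by
    have hballdisj : ∀ s ∈ S, ∀ s' ∈ S, s ≠ s' → Disjoint (bal s 1) (bal s' 1) := by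
      intro s hs s' hs' hne
      rw [Finset.disjoint_left]
      intro m hm hm'
      refine hsep s hs s' hs' hne (mem_flower.mpr ⟨m, mem_bal.mp hm, ?_⟩)
      rw [dist_comm]
      exact mem_bal.mp hm'
    calc ∑ s ∈ S, y s ≤ ∑ s ∈ S, ∑ m ∈ bal s 1, x m :=
          Finset.sum_le_sum fun s _ => min_le_right _ _
    _ = ∑ m ∈ S.biUnion fun s => bal s 1, x m := (Finset.sum_biUnion hballdisj).symm
    _ ≤ ∑ m : P, x m := Finset.sum_le_sum_of_subset_of_nonneg (Finset.subset_univ _)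
          fun m _ _ => hx0 m
    _ ≤ (k : ℝ) := hk
  -- coverage constraints
  have hpc : ∀ c, (p c : ℝ) ≤ ∑ s ∈ S, y s * (a s c : ℝ) := by
    intro c
    have h1 : ∑ i ∈ 𝒞 c, z i = ∑ i ∈ 𝒞 c ∩ T, z i := by
      refine (Finset.sum_subset Finset.inter_subset_left ?_).symm
      intro i hi hiT
      have : i ∉ T := fun h => hiT (Finset.mem_inter.mpr ⟨hi, h⟩)
      rw [hTmem] at this
      linarith [hz0 i]
    have h2 : 𝒞 c ∩ T = S.biUnion fun s => Fc s ∩ 𝒞 c := by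
      ext i
      simp only [Finset.mem_inter, Finset.mem_biUnion]
      constructor
      · rintro ⟨hic, hiT⟩
        exact ⟨sel i, (hselspec i hiT).1, Finset.mem_filter.mpr ⟨hiT, rfl⟩, hic⟩
      · rintro ⟨s, _, hiF, hic⟩
        exact ⟨hic, (Finset.mem_filter.mp hiF).1⟩
    have h3 : ∑ i ∈ 𝒞 c ∩ T, z i = ∑ s ∈ S, ∑ i ∈ Fc s ∩ 𝒞 c, z i := by
      rw [h2]
      exact Finset.sum_biUnion fun s hs s' hs' hne =>
        Finset.disjoint_of_subset_left Finset.inter_subset_left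
          (Finset.disjoint_of_subset_right Finset.inter_subset_left (hFcdisj s s' hne))
    have h4 : ∀ s ∈ S, ∑ i ∈ Fc s ∩ 𝒞 c, z i ≤ y s * (a s c : ℝ) := by
      intro s _
      have hzy : ∀ i ∈ Fc s ∩ 𝒞 c, z i ≤ y s := by
        intro i hi
        have hiF := (Finset.mem_inter.mp hi).1
        obtain ⟨hiT, hisel⟩ := Finset.mem_filter.mp hiF
        have hzi : z i ≤ z s := by
          have := (hselspec i hiT).2.2
          rwa [hisel] at this
        refine le_min (hz1 i) (le_trans hzi (hcov s))
      have := Finset.sum_le_card_nsmul (Fc s ∩ 𝒞 c) z (y s) hzy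
      rw [nsmul_eq_mul] at this
      rw [mul_comm]
      exact this
    calc (p c : ℝ) ≤ ∑ i ∈ 𝒞 c, z i := hp c
    _ = ∑ s ∈ S, ∑ i ∈ Fc s ∩ 𝒞 c, z i := by rw [h1, h3]
    _ ≤ ∑ s ∈ S, y s * (a s c : ℝ) := Finset.sum_le_sum h4
  -- a bounded by M
  have hMc : ∀ s ∈ S, ∀ c, a s c ≤ M c := by
    intro s hs c
    have h1 : Fc s ∩ 𝒞 c ⊆ flower s ∩ 𝒞 c :=
      Finset.inter_subset_inter (hFcflower s) le_rfl
    refine le_trans (Finset.card_le_card h1) ?_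
    simp only [hM]
    exact Finset.le_sup (f := fun j => (flower j ∩ 𝒞 c).card) (hST hs)
  obtain ⟨C, hCS, hCk, hCi0, hCother⟩ := rounding S k y a p M ⟨0, hω⟩ hyr hksum hpc hMc
  -- coverage cardinality
  have hcover : ∀ c : Fin ω, ∑ s ∈ C, (a s c : ℝ)
      ≤ ((𝒞 c ∩ C.biUnion fun s => bal s 2).card : ℝ) := by
    intro c
    have hsub : (C.biUnion fun s => Fc s ∩ 𝒞 c) ⊆ 𝒞 c ∩ C.biUnion fun s => bal s 2 := by
      intro i hi
      obtain ⟨s, hsC, hi'⟩ := Finset.mem_biUnion.mp hi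
      obtain ⟨hiF, hic⟩ := Finset.mem_inter.mp hi'
      refine Finset.mem_inter.mpr ⟨hic, Finset.mem_biUnion.mpr ⟨s, hsC, ?_⟩⟩
      exact flower_subset_bal2 s (hFcflower s hiF)
    have hcard : (C.biUnion fun s => Fc s ∩ 𝒞 c).card = ∑ s ∈ C, a s c := by
      refine Finset.card_biUnion fun s hs s' hs' hne =>
        Finset.disjoint_of_subset_left Finset.inter_subset_left
          (Finset.disjoint_of_subset_right Finset.inter_subset_left (hFcdisj s s' hne))
    have := Finset.card_le_card hsub
    rw [hcard] at this
    exact_mod_cast this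
  refine ⟨C, hCk, ?_, ?_⟩
  · have := le_trans hCi0 (hcover ⟨0, hω⟩)
    exact_mod_cast this
  · intro i hi
    have h1 := le_trans (hCother i hi) (hcover i)
    have h2 : ((p i : ℤ) - (ω - 1 : ℤ) * ((M i : ℕ) : ℤ) : ℝ)
        ≤ (((𝒞 i ∩ C.biUnion fun s => bal s 2).card : ℤ) : ℝ) := by
      push_cast
      push_cast at h1
      linarith
    exact_mod_cast h2
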